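/- Let n ≥ 2 and m ≥ 1 be natural numbers, let pos, neg : Fin m → Finset (Fin n) satisfy pos j ∩ neg j = ∅ for every j, set r' = ⌈log₂ n⌉, and let t ≥ 1 be a natural number with 10^t > 2^{r'+1}. Index weights by ι = (Fin n ⊕ Fin n) ⊕ (Fin m × Fin r') and define w : ι → ℕ by: a_i = w(inl(inl i)) = 10^{t(m+1)+(i+1)} + Σ_{j : i ∈ pos j} 10^{t(j+1)}; b_i = w(inl(inr i)) = 10^{t(m+1)+(i+1)} + Σ_{j : i ∈ neg j} 10^{t(j+1)}; and w(inr(j,s)) = 2^s · 10^{t(j+1)}. Define q' = Σ_{i ∈ Fin n} 10^{t(m+1)+(i+1)} + 2^{r'} · Σ_{j ∈ Fin m} 10^{t(j+1)}. Then the number of finite sets S ⊆ ι with Σ_{x ∈ S} w(x) = q' equals the number of assignments α : Fin n → Bool such that for every j ∈ Fin m there is some i ∈ pos j with α i = true or some i ∈ neg j with α i = false. -/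

import Mathlib

set_option linter.unusedVariables false

open Finset

lemma sum_pow_lt' {B : ℕ} : ∀ (k : ℕ) (d : ℕ → ℕ), (∀ i < k, d i < B) →
    ∑ i ∈ Finset.range k, d i * B ^ i < B ^ k := by
  intro k
  induction k with
  | zero => intro d _; simp
  | succ k ih =>
    intro d hd
    rw [Finset.sum_range_succ]
    have h1 := ih d (fun i hi => hd i (by omega))
    have h2 : d k < B := hd k (by omega)
    have h3 : d k * B ^ k ≤ (B - 1) * B ^ k := Nat.mul_le_mul_right _ (by omega)
    have h4 : B ^ k + (B - 1) * B ^ k = B ^ (k + 1) := by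
      have : B ^ k + (B - 1) * B ^ k = (1 + (B - 1)) * B ^ k := by ring
      rw [this, show 1 + (B - 1) = B by omega, pow_succ]; ring
    omega

lemma sum_pow_inj' {B : ℕ} : ∀ (k : ℕ) (d e : ℕ → ℕ), (∀ i < k, d i < B) →
    (∀ i < k, e i < B) →
    ∑ i ∈ Finset.range k, d i * B ^ i = ∑ i ∈ Finset.range k, e i * B ^ i →
    ∀ i < k, d i = e i := by
  intro k
  induction k with
  | zero => intro d e _ _ _ i hi; omega
  | succ k ih =>
    intro d e hd he h i hi
    have hdk := hd k (by omega); have hek := he k (by omega)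
    have hBpos : 0 < B ^ k := Nat.pow_pos (by omega)
    have hld := sum_pow_lt' k d (fun i hi => hd i (by omega))
    have hle := sum_pow_lt' k e (fun i hi => he i (by omega))
    rw [Finset.sum_range_succ, Finset.sum_range_succ] at h
    have hdiv : ∀ (f : ℕ → ℕ), (∀ i < k, f i < B) →
        (∑ i ∈ Finset.range k, f i * B ^ i + f k * B ^ k) / B ^ k = f k := by
      intro f hf
      rw [Nat.add_mul_div_right _ _ hBpos,
        Nat.div_eq_of_lt (sum_pow_lt' k f (fun i hi => hf i (by omega)))]
      omega
    have hd' := hdiv d (fun i hi => hd i (by omega))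
    have he' := hdiv e (fun i hi => he i (by omega))
    rw [h] at hd'
    have h1 : d k = e k := by omega
    rcases Nat.lt_or_ge i k with hik | hik
    · rw [h1] at h
      have hlow : ∑ i ∈ Finset.range k, d i * B ^ i = ∑ i ∈ Finset.range k, e i * B ^ i := by
        omega
      exact ih d e (fun i hi => hd i (by omega)) (fun i hi => he i (by omega)) hlow i hik
    · have hik2 : i = k := by omega
      rw [hik2]; exact h1

lemma sum_testBit' : ∀ (k v : ℕ), v < 2 ^ k →
    ∑ s ∈ Finset.range k, (if v.testBit s then 2 ^ s else 0) = v := by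
  intro k
  induction k with
  | zero => intro v hv; interval_cases v; simp
  | succ k ih =>
    intro v hv
    rw [Finset.sum_range_succ']
    have h2 : v / 2 < 2 ^ k := by
      rw [pow_succ] at hv; omega
    have := ih (v / 2) h2
    have hrw : ∀ s, (if v.testBit (s + 1) then 2 ^ (s + 1) else 0)
        = 2 * if (v / 2).testBit s then 2 ^ s else 0 := by
      intro s
      rw [Nat.testBit_succ]
      split <;> ring
    rw [Finset.sum_congr rfl fun s _ => hrw s, ← Finset.mul_sum, this]
    have h0 : (if v.testBit 0 then 2 ^ 0 else 0) = v % 2 := by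
      simp only [Nat.testBit_zero, pow_zero]
      split <;> rename_i hh <;> simp at hh <;> omega
    rw [h0]; omega


open Finset

lemma fin_to_range {M : Type*} [AddCommMonoid M] (k : ℕ) (f : Fin k → M) (g : ℕ → M) (h : ∀ i : Fin k, f i = g i) :
    ∑ i : Fin k, f i = ∑ i ∈ Finset.range k, g i := by
  rw [Finset.sum_congr rfl fun i _ => h i, Fin.sum_univ_eq_sum_range]

lemma fin_sum_pow_lt {B k : ℕ} (d : Fin k → ℕ) (hd : ∀ i, d i < B) :
    ∑ i : Fin k, d i * B ^ (i : ℕ) < B ^ k := by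
  classical
  rw [fin_to_range k _ (fun i => (if h : i < k then d ⟨i, h⟩ else 0) * B ^ i)
    (fun i => by simp [dif_pos i.isLt])]
  exact sum_pow_lt' k _ (fun i hi => by rw [dif_pos hi]; exact hd ⟨i, hi⟩)

lemma fin_sum_pow_inj {B k : ℕ} (d e : Fin k → ℕ) (hd : ∀ i, d i < B) (he : ∀ i, e i < B)
    (h : ∑ i : Fin k, d i * B ^ (i : ℕ) = ∑ i : Fin k, e i * B ^ (i : ℕ)) : ∀ i, d i = e i := by
  classical
  intro i
  rw [fin_to_range k _ (fun i => (if h : i < k then d ⟨i, h⟩ else 0) * B ^ i)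
    (fun i => by simp [dif_pos i.isLt]),
    fin_to_range k _ (fun i => (if h : i < k then e ⟨i, h⟩ else 0) * B ^ i)
    (fun i => by simp [dif_pos i.isLt])] at h
  have := sum_pow_inj' k _ _ (fun i hi => by rw [dif_pos hi]; exact hd ⟨i, hi⟩)
    (fun i hi => by rw [dif_pos hi]; exact he ⟨i, hi⟩) h i i.isLt
  rwa [dif_pos i.isLt, dif_pos i.isLt] at this

lemma fin_sum_testBit {k v : ℕ} (hv : v < 2 ^ k) :
    ∑ s : Fin k, (if v.testBit (s : ℕ) then 2 ^ (s : ℕ) else 0) = v := by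
  rw [fin_to_range k _ (fun s => if v.testBit s then 2 ^ s else 0) (fun s => rfl)]
  exact sum_testBit' k v hv


variable {n m r' t : ℕ}

def uval (S : Finset ((Fin n ⊕ Fin n) ⊕ (Fin m × Fin r'))) (i : Fin n) : ℕ :=
  (if Sum.inl (Sum.inl i) ∈ S then 1 else 0) + (if Sum.inl (Sum.inr i) ∈ S then 1 else 0)

def cval (pos neg : Fin m → Finset (Fin n))
    (S : Finset ((Fin n ⊕ Fin n) ⊕ (Fin m × Fin r'))) (j : Fin m) : ℕ :=
  (∑ i ∈ pos j, if Sum.inl (Sum.inl i) ∈ S then 1 else 0) +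
  (∑ i ∈ neg j, if Sum.inl (Sum.inr i) ∈ S then 1 else 0) +
  ∑ s : Fin r', if Sum.inr (j, s) ∈ S then 2 ^ (s : ℕ) else 0

lemma decomp (pos neg : Fin m → Finset (Fin n))
    (w : (Fin n ⊕ Fin n) ⊕ (Fin m × Fin r') → ℕ)
    (hwa : ∀ i : Fin n, w (Sum.inl (Sum.inl i)) =
        10 ^ (t * (m + 1) + ((i : ℕ) + 1)) +
          ∑ j ∈ Finset.univ.filter fun j : Fin m => i ∈ pos j, 10 ^ (t * ((j : ℕ) + 1)))
    (hwb : ∀ i : Fin n, w (Sum.inl (Sum.inr i)) =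
        10 ^ (t * (m + 1) + ((i : ℕ) + 1)) +
          ∑ j ∈ Finset.univ.filter fun j : Fin m => i ∈ neg j, 10 ^ (t * ((j : ℕ) + 1)))
    (hwc : ∀ j : Fin m, ∀ s : Fin r', w (Sum.inr (j, s)) =
        2 ^ (s : ℕ) * 10 ^ (t * ((j : ℕ) + 1)))
    (S : Finset ((Fin n ⊕ Fin n) ⊕ (Fin m × Fin r'))) :
    ∑ x ∈ S, w x =
      (∑ i : Fin n, uval S i * 10 ^ (t * (m + 1) + ((i : ℕ) + 1))) +
      ∑ j : Fin m, cval pos neg S j * 10 ^ (t * ((j : ℕ) + 1)) := by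
  classical
  have hS : S = Finset.univ.filter (· ∈ S) := by ext x; simp
  conv_lhs => rw [hS]
  rw [Finset.sum_filter, Fintype.sum_sum_type, Fintype.sum_sum_type, Fintype.sum_prod_type]
  -- name the three chunks
  have hT3 : (∑ j : Fin m, ∑ s : Fin r', if Sum.inr (j, s) ∈ S then w (Sum.inr (j, s)) else 0)
      = ∑ j : Fin m, (∑ s : Fin r', if Sum.inr (j, s) ∈ S then 2 ^ (s : ℕ) else 0)
          * 10 ^ (t * ((j : ℕ) + 1)) := by
    refine Finset.sum_congr rfl fun j _ => ?_
    rw [Finset.sum_mul]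
    refine Finset.sum_congr rfl fun s _ => ?_
    rw [hwc j s]
    split <;> simp
  have hT1 : ∀ (pp : Fin m → Finset (Fin n)) (mem : Fin n → Prop) [DecidablePred mem],
      (∑ i : Fin n, if mem i then (10 ^ (t * (m + 1) + ((i : ℕ) + 1)) +
          ∑ j ∈ Finset.univ.filter fun j : Fin m => i ∈ pp j, 10 ^ (t * ((j : ℕ) + 1))) else 0)
      = (∑ i : Fin n, (if mem i then 1 else 0) * 10 ^ (t * (m + 1) + ((i : ℕ) + 1))) +
        ∑ j : Fin m, (∑ i ∈ pp j, if mem i then 1 else 0) * 10 ^ (t * ((j : ℕ) + 1)) := by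
    intro pp mem _
    have step1 : ∀ i : Fin n, (if mem i then (10 ^ (t * (m + 1) + ((i : ℕ) + 1)) +
          ∑ j ∈ Finset.univ.filter fun j : Fin m => i ∈ pp j, 10 ^ (t * ((j : ℕ) + 1))) else 0)
        = (if mem i then 1 else 0) * 10 ^ (t * (m + 1) + ((i : ℕ) + 1)) +
          ∑ j : Fin m, (if i ∈ pp j then (if mem i then 1 else 0) else 0) * 10 ^ (t * ((j : ℕ) + 1)) := by
      intro i
      rw [Finset.sum_filter]
      split <;> simp
    rw [Finset.sum_congr rfl fun i _ => step1 i, Finset.sum_add_distrib]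
    congr 1
    rw [Finset.sum_comm]
    refine Finset.sum_congr rfl fun j _ => ?_
    rw [← Finset.sum_mul]
    congr 1
    rw [← Finset.sum_filter, Finset.filter_univ_mem]
  have e1 : (∑ i : Fin n, if Sum.inl (Sum.inl i) ∈ S then w (Sum.inl (Sum.inl i)) else 0)
      = ∑ i : Fin n, if Sum.inl (Sum.inl i) ∈ S then (10 ^ (t * (m + 1) + ((i : ℕ) + 1)) +
          ∑ j ∈ Finset.univ.filter fun j : Fin m => i ∈ pos j, 10 ^ (t * ((j : ℕ) + 1))) else 0 :=
    Finset.sum_congr rfl fun i _ => by rw [hwa i]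
  have e2 : (∑ i : Fin n, if Sum.inl (Sum.inr i) ∈ S then w (Sum.inl (Sum.inr i)) else 0)
      = ∑ i : Fin n, if Sum.inl (Sum.inr i) ∈ S then (10 ^ (t * (m + 1) + ((i : ℕ) + 1)) +
          ∑ j ∈ Finset.univ.filter fun j : Fin m => i ∈ neg j, 10 ^ (t * ((j : ℕ) + 1))) else 0 :=
    Finset.sum_congr rfl fun i _ => by rw [hwb i]
  rw [e1, e2, hT3, hT1 pos (fun i => Sum.inl (Sum.inl i) ∈ S),
    hT1 neg (fun i => Sum.inl (Sum.inr i) ∈ S)]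
  simp only [uval, cval, add_mul, Finset.sum_add_distrib]
  ring

lemma digits_unique (ht : 1 ≤ t) (u u' : Fin n → ℕ) (C C' : Fin m → ℕ)
    (hu : ∀ i, u i < 10) (hu' : ∀ i, u' i < 10)
    (hC : ∀ j, C j < 10 ^ t) (hC' : ∀ j, C' j < 10 ^ t)
    (h : (∑ i : Fin n, u i * 10 ^ (t * (m + 1) + ((i : ℕ) + 1))) +
          ∑ j : Fin m, C j * 10 ^ (t * ((j : ℕ) + 1)) =
        (∑ i : Fin n, u' i * 10 ^ (t * (m + 1) + ((i : ℕ) + 1))) +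
          ∑ j : Fin m, C' j * 10 ^ (t * ((j : ℕ) + 1))) :
    (∀ i, u i = u' i) ∧ (∀ j, C j = C' j) := by
  have keyU : ∀ v : Fin n → ℕ, (∑ i : Fin n, v i * 10 ^ (t * (m + 1) + ((i : ℕ) + 1)))
      = 10 ^ (t * (m + 1) + 1) * ∑ i : Fin n, v i * 10 ^ (i : ℕ) := by
    intro v
    rw [Finset.mul_sum]
    refine Finset.sum_congr rfl fun i _ => ?_
    rw [show t * (m + 1) + ((i : ℕ) + 1) = (t * (m + 1) + 1) + (i : ℕ) by omega, pow_add]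
    ring
  have keyC : ∀ D : Fin m → ℕ, (∑ j : Fin m, D j * 10 ^ (t * ((j : ℕ) + 1)))
      = 10 ^ t * ∑ j : Fin m, D j * (10 ^ t) ^ (j : ℕ) := by
    intro D
    rw [Finset.mul_sum]
    refine Finset.sum_congr rfl fun j _ => ?_
    rw [show t * ((j : ℕ) + 1) = t + t * (j : ℕ) by ring, pow_add, pow_mul]
    ring
  rw [keyU u, keyU u', keyC C, keyC C'] at h
  set D := 10 ^ (t * (m + 1) + 1) with hD
  set T := 10 ^ t with hT
  have hDpos : 0 < D := Nat.pow_pos (by norm_num)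
  have hTpos : 0 < T := Nat.pow_pos (by norm_num)
  have hLd : ∑ j : Fin m, C j * T ^ (j : ℕ) < T ^ m := fin_sum_pow_lt C hC
  have hLe : ∑ j : Fin m, C' j * T ^ (j : ℕ) < T ^ m := fin_sum_pow_lt C' hC'
  have hTm : T * T ^ m ≤ D := by
    rw [hD, hT, ← pow_succ']
    rw [← pow_mul]
    exact Nat.pow_le_pow_right (by norm_num) (by omega)
  have hlo1 : T * ∑ j : Fin m, C j * T ^ (j : ℕ) < D :=
    lt_of_lt_of_le (by exact (Nat.mul_lt_mul_left hTpos).mpr hLd) hTm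
  have hlo2 : T * ∑ j : Fin m, C' j * T ^ (j : ℕ) < D :=
    lt_of_lt_of_le (by exact (Nat.mul_lt_mul_left hTpos).mpr hLe) hTm
  have hdiv : ∀ (a b : ℕ), b < D → (D * a + b) / D = a := by
    intro a b hb
    rw [Nat.mul_add_div hDpos, Nat.div_eq_of_lt hb]
    omega
  have h1 : ∑ i : Fin n, u i * 10 ^ (i : ℕ) = ∑ i : Fin n, u' i * 10 ^ (i : ℕ) := by
    have e1 := hdiv (∑ i : Fin n, u i * 10 ^ (i : ℕ)) _ hlo1
    have e2 := hdiv (∑ i : Fin n, u' i * 10 ^ (i : ℕ)) _ hlo2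
    rw [h] at e1
    omega
  have h2 : ∑ j : Fin m, C j * T ^ (j : ℕ) = ∑ j : Fin m, C' j * T ^ (j : ℕ) := by
    rw [h1] at h
    have : T * ∑ j : Fin m, C j * T ^ (j : ℕ) = T * ∑ j : Fin m, C' j * T ^ (j : ℕ) := by omega
    exact Nat.eq_of_mul_eq_mul_left hTpos this
  exact ⟨fin_sum_pow_inj u u' hu hu' h1, fin_sum_pow_inj C C' hC hC' h2⟩

lemma bits_lt (S : Finset ((Fin n ⊕ Fin n) ⊕ (Fin m × Fin r'))) (j : Fin m) :
    (∑ s : Fin r', if Sum.inr (j, s) ∈ S then 2 ^ (s : ℕ) else 0) < 2 ^ r' := by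
  have : (∑ s : Fin r', if Sum.inr (j, s) ∈ S then 2 ^ (s : ℕ) else 0)
      = ∑ s : Fin r', (if Sum.inr (j, s) ∈ S then 1 else 0) * 2 ^ (s : ℕ) :=
    Finset.sum_congr rfl fun s _ => by split <;> simp
  rw [this]
  exact fin_sum_pow_lt _ (fun s => by split <;> omega)

lemma indsum_le (s : Finset (Fin n)) (p : Fin n → Prop) [DecidablePred p] :
    (∑ i ∈ s, if p i then 1 else 0) ≤ s.card := by
  calc (∑ i ∈ s, if p i then 1 else 0) ≤ ∑ i ∈ s, 1 :=
        Finset.sum_le_sum (fun i _ => by split <;> omega)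
    _ = s.card := by simp

lemma cards_le (pos neg : Fin m → Finset (Fin n)) (hdisj : ∀ j, pos j ∩ neg j = ∅) (j : Fin m) :
    (pos j).card + (neg j).card ≤ n := by
  have hd : Disjoint (pos j) (neg j) := Finset.disjoint_iff_inter_eq_empty.mpr (hdisj j)
  calc (pos j).card + (neg j).card = ((pos j) ∪ (neg j)).card :=
        (Finset.card_union_of_disjoint hd).symm
    _ ≤ (Finset.univ : Finset (Fin n)).card := Finset.card_le_univ _
    _ = n := by simp

lemma cval_lt (pos neg : Fin m → Finset (Fin n)) (hdisj : ∀ j, pos j ∩ neg j = ∅)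
    (hn2 : n ≤ 2 ^ r') (ht10 : 2 ^ (r' + 1) < 10 ^ t)
    (S : Finset ((Fin n ⊕ Fin n) ⊕ (Fin m × Fin r'))) (j : Fin m) :
    cval pos neg S j < 10 ^ t := by
  have h1 := indsum_le (pos j) (fun i => Sum.inl (Sum.inl i) ∈ S)
  have h2 := indsum_le (neg j) (fun i => Sum.inl (Sum.inr i) ∈ S)
  have h3 := bits_lt S j
  have h4 := cards_le pos neg hdisj j
  have h5 : 2 ^ (r' + 1) = 2 * 2 ^ r' := by rw [pow_succ]; ring
  unfold cval
  omega

lemma charac (ht : 1 ≤ t) (pos neg : Fin m → Finset (Fin n))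
    (hdisj : ∀ j, pos j ∩ neg j = ∅)
    (hn2 : n ≤ 2 ^ r') (ht10 : 2 ^ (r' + 1) < 10 ^ t)
    (w : (Fin n ⊕ Fin n) ⊕ (Fin m × Fin r') → ℕ)
    (hwa : ∀ i : Fin n, w (Sum.inl (Sum.inl i)) =
        10 ^ (t * (m + 1) + ((i : ℕ) + 1)) +
          ∑ j ∈ Finset.univ.filter fun j : Fin m => i ∈ pos j, 10 ^ (t * ((j : ℕ) + 1)))
    (hwb : ∀ i : Fin n, w (Sum.inl (Sum.inr i)) =
        10 ^ (t * (m + 1) + ((i : ℕ) + 1)) +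
          ∑ j ∈ Finset.univ.filter fun j : Fin m => i ∈ neg j, 10 ^ (t * ((j : ℕ) + 1)))
    (hwc : ∀ j : Fin m, ∀ s : Fin r', w (Sum.inr (j, s)) =
        2 ^ (s : ℕ) * 10 ^ (t * ((j : ℕ) + 1)))
    (q' : ℕ)
    (hq' : q' = (∑ i : Fin n, 10 ^ (t * (m + 1) + ((i : ℕ) + 1))) +
        2 ^ r' * ∑ j : Fin m, 10 ^ (t * ((j : ℕ) + 1)))
    (S : Finset ((Fin n ⊕ Fin n) ⊕ (Fin m × Fin r'))) :
    (∑ x ∈ S, w x = q') ↔ (∀ i, uval S i = 1) ∧ (∀ j, cval pos neg S j = 2 ^ r') := by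
  have hq'2 : q' = (∑ i : Fin n, 1 * 10 ^ (t * (m + 1) + ((i : ℕ) + 1))) +
      ∑ j : Fin m, 2 ^ r' * 10 ^ (t * ((j : ℕ) + 1)) := by
    rw [hq', Finset.mul_sum]
    simp
  rw [decomp pos neg w hwa hwb hwc S, hq'2]
  constructor
  · intro h
    have hub : ∀ i, uval S i < 10 := fun i => by unfold uval; split <;> split <;> omega
    have h2r : 2 ^ r' < 10 ^ t := by
      have : 2 ^ r' < 2 ^ (r' + 1) := Nat.pow_lt_pow_right (by norm_num) (by omega)
      omega
    exact digits_unique ht (uval S) (fun _ => 1) (cval pos neg S) (fun _ => 2 ^ r')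
      hub (fun _ => by norm_num)
      (cval_lt pos neg hdisj hn2 ht10 S) (fun _ => h2r) h
  · rintro ⟨h1, h2⟩
    have e1 : (∑ i : Fin n, uval S i * 10 ^ (t * (m + 1) + ((i : ℕ) + 1)))
        = ∑ i : Fin n, 1 * 10 ^ (t * (m + 1) + ((i : ℕ) + 1)) :=
      Finset.sum_congr rfl fun i _ => by rw [h1 i]
    have e2 : (∑ j : Fin m, cval pos neg S j * 10 ^ (t * ((j : ℕ) + 1)))
        = ∑ j : Fin m, 2 ^ r' * 10 ^ (t * ((j : ℕ) + 1)) :=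
      Finset.sum_congr rfl fun j _ => by rw [h2 j]
    rw [e1, e2]

def bsetP (α : Fin n → Bool) (v : Fin m → ℕ) :
    ((Fin n ⊕ Fin n) ⊕ (Fin m × Fin r')) → Bool
  | Sum.inl (Sum.inl i) => α i
  | Sum.inl (Sum.inr i) => !(α i)
  | Sum.inr (j, s) => (v j).testBit (s : ℕ)

def bset (α : Fin n → Bool) (v : Fin m → ℕ) : Finset ((Fin n ⊕ Fin n) ⊕ (Fin m × Fin r')) :=
  Finset.univ.filter (fun x => bsetP α v x = true)

@[simp] lemma mem_bset_a (α : Fin n → Bool) (v : Fin m → ℕ) (i : Fin n) :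
    (Sum.inl (Sum.inl i) ∈ (bset α v : Finset ((Fin n ⊕ Fin n) ⊕ (Fin m × Fin r')))) ↔
      α i = true := by rw [bset, Finset.mem_filter]; simp [bsetP]

@[simp] lemma mem_bset_b (α : Fin n → Bool) (v : Fin m → ℕ) (i : Fin n) :
    (Sum.inl (Sum.inr i) ∈ (bset α v : Finset ((Fin n ⊕ Fin n) ⊕ (Fin m × Fin r')))) ↔
      α i = false := by rw [bset, Finset.mem_filter]; simp [bsetP]

@[simp] lemma mem_bset_c (α : Fin n → Bool) (v : Fin m → ℕ) (j : Fin m) (s : Fin r') :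
    (Sum.inr (j, s) ∈ (bset α v : Finset ((Fin n ⊕ Fin n) ⊕ (Fin m × Fin r')))) ↔
      (v j).testBit (s : ℕ) = true := by rw [bset, Finset.mem_filter]; simp [bsetP]

def kcount (pos neg : Fin m → Finset (Fin n)) (α : Fin n → Bool) (j : Fin m) : ℕ :=
  (∑ i ∈ pos j, if α i = true then 1 else 0) + ∑ i ∈ neg j, if α i = false then 1 else 0

lemma kcount_le (pos neg : Fin m → Finset (Fin n)) (hdisj : ∀ j, pos j ∩ neg j = ∅)
    (α : Fin n → Bool) (j : Fin m) : kcount pos neg α j ≤ n := by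
  have h1 := indsum_le (pos j) (fun i => α i = true)
  have h2 := indsum_le (neg j) (fun i => α i = false)
  have h3 := cards_le pos neg hdisj j
  unfold kcount; omega

lemma kcount_pos (pos neg : Fin m → Finset (Fin n)) (α : Fin n → Bool) (j : Fin m)
    (hsat : (∃ i ∈ pos j, α i = true) ∨ (∃ i ∈ neg j, α i = false)) :
    1 ≤ kcount pos neg α j := by
  unfold kcount
  rcases hsat with ⟨i, hi, hα⟩ | ⟨i, hi, hα⟩
  · have h1 : (1 : ℕ) ≤ ∑ i ∈ pos j, if α i = true then 1 else 0 := by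
      have := Finset.single_le_sum (f := fun i => if α i = true then 1 else 0)
        (fun i _ => Nat.zero_le _) hi
      simpa [hα] using this
    omega
  · have h1 : (1 : ℕ) ≤ ∑ i ∈ neg j, if α i = false then 1 else 0 := by
      have := Finset.single_le_sum (f := fun i => if α i = false then 1 else 0)
        (fun i _ => Nat.zero_le _) hi
      simpa [hα] using this
    omega



theorem num_subset_sum_solutions_eq_num_satisfying_assignments
    (n m t : ℕ) (hn : 2 ≤ n) (hm : 1 ≤ m) (ht : 1 ≤ t)
    (pos neg : Fin m → Finset (Fin n)) (hdisj : ∀ j, pos j ∩ neg j = ∅)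
    (r' : ℕ) (hr' : r' = Nat.clog 2 n) (ht10 : 2 ^ (r' + 1) < 10 ^ t)
    (w : (Fin n ⊕ Fin n) ⊕ (Fin m × Fin r') → ℕ)
    (hwa : ∀ i : Fin n, w (Sum.inl (Sum.inl i)) =
        10 ^ (t * (m + 1) + ((i : ℕ) + 1)) +
          ∑ j ∈ Finset.univ.filter fun j : Fin m => i ∈ pos j, 10 ^ (t * ((j : ℕ) + 1)))
    (hwb : ∀ i : Fin n, w (Sum.inl (Sum.inr i)) =
        10 ^ (t * (m + 1) + ((i : ℕ) + 1)) +
          ∑ j ∈ Finset.univ.filter fun j : Fin m => i ∈ neg j, 10 ^ (t * ((j : ℕ) + 1)))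
    (hwc : ∀ j : Fin m, ∀ s : Fin r', w (Sum.inr (j, s)) =
        2 ^ (s : ℕ) * 10 ^ (t * ((j : ℕ) + 1)))
    (q' : ℕ)
    (hq' : q' = (∑ i : Fin n, 10 ^ (t * (m + 1) + ((i : ℕ) + 1))) +
        2 ^ r' * ∑ j : Fin m, 10 ^ (t * ((j : ℕ) + 1))) :
    Nat.card {S : Finset ((Fin n ⊕ Fin n) ⊕ (Fin m × Fin r')) // ∑ x ∈ S, w x = q'} =
      Nat.card {α : Fin n → Bool //
        ∀ j : Fin m, (∃ i ∈ pos j, α i = true) ∨ (∃ i ∈ neg j, α i = false)} := by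
  classical
  have hn2 : n ≤ 2 ^ r' := by rw [hr']; exact Nat.le_pow_clog one_lt_two n
  have hch : ∀ S : Finset ((Fin n ⊕ Fin n) ⊕ (Fin m × Fin r')),
      (∑ x ∈ S, w x = q') ↔ (∀ i, uval S i = 1) ∧ (∀ j, cval pos neg S j = 2 ^ r') :=
    charac ht pos neg hdisj hn2 ht10 w hwa hwb hwc q' hq'
  have fwd : ∀ α : Fin n → Bool,
      (∀ j : Fin m, (∃ i ∈ pos j, α i = true) ∨ (∃ i ∈ neg j, α i = false)) →
      ∑ x ∈ bset (r' := r') α (fun j => 2 ^ r' - kcount pos neg α j), w x = q' := by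
    intro α hsat
    rw [hch]
    refine ⟨fun i => ?_, fun j => ?_⟩
    · unfold uval
      rcases h : α i with _ | _ <;> simp [h]
    · have hk1 := kcount_pos pos neg α j (hsat j)
      have hkn := kcount_le pos neg hdisj α j
      have hv : 2 ^ r' - kcount pos neg α j < 2 ^ r' := by omega
      unfold cval
      have e1 : (∑ i ∈ pos j, if Sum.inl (Sum.inl i) ∈
            bset (r' := r') α (fun j => 2 ^ r' - kcount pos neg α j) then 1 else 0)
          = ∑ i ∈ pos j, if α i = true then 1 else 0 :=
        Finset.sum_congr rfl fun i _ => by simp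
      have e2 : (∑ i ∈ neg j, if Sum.inl (Sum.inr i) ∈
            bset (r' := r') α (fun j => 2 ^ r' - kcount pos neg α j) then 1 else 0)
          = ∑ i ∈ neg j, if α i = false then 1 else 0 :=
        Finset.sum_congr rfl fun i _ => by simp
      have e3 : (∑ s : Fin r', if Sum.inr (j, s) ∈
            bset (r' := r') α (fun j => 2 ^ r' - kcount pos neg α j) then 2 ^ (s : ℕ) else 0)
          = 2 ^ r' - kcount pos neg α j := by
        have e3' : (∑ s : Fin r', if Sum.inr (j, s) ∈
              bset (r' := r') α (fun j => 2 ^ r' - kcount pos neg α j) then 2 ^ (s : ℕ) else 0)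
            = ∑ s : Fin r',
              if (2 ^ r' - kcount pos neg α j).testBit (s : ℕ) then 2 ^ (s : ℕ) else 0 :=
          Finset.sum_congr rfl fun s _ => by simp only [mem_bset_c]
        rw [e3']
        exact fin_sum_testBit hv
      rw [e1, e2, e3]
      unfold kcount at hk1 hkn ⊢
      omega
  have bwd : ∀ S : Finset ((Fin n ⊕ Fin n) ⊕ (Fin m × Fin r')), (∑ x ∈ S, w x = q') →
      ∀ j : Fin m, (∃ i ∈ pos j, decide (Sum.inl (Sum.inl i) ∈ S) = true) ∨
        (∃ i ∈ neg j, decide (Sum.inl (Sum.inl i) ∈ S) = false) := by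
    intro S hS j
    obtain ⟨hu, hc⟩ := (hch S).mp hS
    by_contra hcon
    push_neg at hcon
    obtain ⟨h1, h2⟩ := hcon
    have hp0 : (∑ i ∈ pos j, if Sum.inl (Sum.inl i) ∈ S then 1 else 0) = 0 :=
      Finset.sum_eq_zero fun i hi => by
        have h1i := h1 i hi
        simp only [ne_eq, decide_eq_true_eq] at h1i
        simp [h1i]
    have hn0 : (∑ i ∈ neg j, if Sum.inl (Sum.inr i) ∈ S then 1 else 0) = 0 :=
      Finset.sum_eq_zero fun i hi => by
        have h2i := h2 i hi
        have hmem : Sum.inl (Sum.inl i) ∈ S := by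
          by_contra hcon2
          simp [hcon2] at h2i
        have hui := hu i
        unfold uval at hui
        rw [if_pos hmem] at hui
        by_cases hb : Sum.inl (Sum.inr i) ∈ S
        · rw [if_pos hb] at hui; omega
        · rw [if_neg hb]
    have hbl := bits_lt S j
    have hcj := hc j
    unfold cval at hcj
    omega
  have rinv : ∀ S : Finset ((Fin n ⊕ Fin n) ⊕ (Fin m × Fin r')), (∑ x ∈ S, w x = q') →
      bset (r' := r') (fun i => decide (Sum.inl (Sum.inl i) ∈ S))
        (fun j => 2 ^ r' - kcount pos neg (fun i => decide (Sum.inl (Sum.inl i) ∈ S)) j)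
      = S := by
    intro S hS
    obtain ⟨hu, hc⟩ := (hch S).mp hS
    set α : Fin n → Bool := fun i => decide (Sum.inl (Sum.inl i) ∈ S) with hαdef
    have hmA : ∀ i, α i = true ↔ Sum.inl (Sum.inl i) ∈ S := fun i => by simp [hαdef]
    have hmB : ∀ i, (Sum.inl (Sum.inr i) ∈ S) ↔ α i = false := by
      intro i
      have hui := hu i
      unfold uval at hui
      by_cases h1 : Sum.inl (Sum.inl i) ∈ S <;> by_cases h2 : Sum.inl (Sum.inr i) ∈ S <;>
        simp [h1, h2, hαdef] at hui ⊢
    have hkb : ∀ j, kcount pos neg α j +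
        (∑ s : Fin r', if Sum.inr (j, s) ∈ S then 2 ^ (s : ℕ) else 0) = 2 ^ r' := by
      intro j
      have hcj := hc j
      unfold cval at hcj
      unfold kcount
      have e1 : (∑ i ∈ pos j, if α i = true then 1 else 0)
          = ∑ i ∈ pos j, if Sum.inl (Sum.inl i) ∈ S then 1 else 0 :=
        Finset.sum_congr rfl fun i _ => by simp [hmA i]
      have e2 : (∑ i ∈ neg j, if α i = false then 1 else 0)
          = ∑ i ∈ neg j, if Sum.inl (Sum.inr i) ∈ S then 1 else 0 :=
        Finset.sum_congr rfl fun i _ => by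
          rw [if_congr (iff_comm.mp (hmB i)) rfl rfl]
      omega
    ext x
    rcases x with (i | i) | ⟨j, s⟩
    · simp [hmA i]
    · simp [hmB i]
    · have hbl := bits_lt S j
      have hkj := hkb j
      have hv : 2 ^ r' - kcount pos neg α j < 2 ^ r' := by omega
      have hd : ∀ s : Fin r', (if Sum.inr (j, s) ∈ S then 1 else 0)
          = (if (2 ^ r' - kcount pos neg α j).testBit (s : ℕ) then 1 else 0) := by
        apply fin_sum_pow_inj (B := 2)
        · intro s; split <;> omega
        · intro s; split <;> omega
        · have eL : (∑ s : Fin r', (if Sum.inr (j, s) ∈ S then 1 else 0) * 2 ^ (s : ℕ))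
              = ∑ s : Fin r', if Sum.inr (j, s) ∈ S then 2 ^ (s : ℕ) else 0 :=
            Finset.sum_congr rfl fun s _ => by split <;> simp
          have eR : (∑ s : Fin r',
                (if (2 ^ r' - kcount pos neg α j).testBit (s : ℕ) then 1 else 0) * 2 ^ (s : ℕ))
              = ∑ s : Fin r',
                if (2 ^ r' - kcount pos neg α j).testBit (s : ℕ) then 2 ^ (s : ℕ) else 0 :=
            Finset.sum_congr rfl fun s _ => by split <;> simp
          rw [eL, eR, fin_sum_testBit hv]
          omega
      have hds := hd s
      simp only [mem_bset_c]
      by_cases hm : Sum.inr (j, s) ∈ S <;>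
        by_cases htb : (2 ^ r' - kcount pos neg α j).testBit (s : ℕ) <;>
        simp [hm, htb] at hds ⊢
  symm
  exact Nat.card_congr
    { toFun := fun a => ⟨bset (r' := r') a.1 (fun j => 2 ^ r' - kcount pos neg a.1 j), fwd a.1 a.2⟩
      invFun := fun S => ⟨fun i => decide (Sum.inl (Sum.inl i) ∈ S.1), bwd S.1 S.2⟩
      left_inv := fun a => Subtype.ext (funext fun i => by simp)
      right_inv := fun S => Subtype.ext (rinv S.1 S.2) }
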